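/- Let X and Y be Banach spaces such that X is isomorphic to a complemented subspace of Y, Y is isomorphic to a complemented subspace of X, X ≅ X ⊕ X, and Y ≅ Y ⊕ Y. Then X is isomorphic to Y (Pełczyński decomposition method). -/

import Mathlib

/-- Associativity of products as a continuous linear equivalence. -/
def pelczynski_prodAssoc (R M₁ M₂ M₃ : Type*) [Semiring R]
    [TopologicalSpace M₁] [AddCommMonoid M₁] [Module R M₁]
    [TopologicalSpace M₂] [AddCommMonoid M₂] [Module R M₂]
    [TopologicalSpace M₃] [AddCommMonoid M₃] [Module R M₃] :
    ((M₁ × M₂) × M₃) ≃L[R] M₁ × (M₂ × M₃) :=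
  { LinearEquiv.prodAssoc R M₁ M₂ M₃ with
    continuous_toFun := by
      exact Continuous.prodMk (continuous_fst.comp continuous_fst)
        (Continuous.prodMk (continuous_snd.comp continuous_fst) continuous_snd)
    continuous_invFun := by
      exact Continuous.prodMk
        (Continuous.prodMk continuous_fst (continuous_fst.comp continuous_snd))
        (continuous_snd.comp continuous_snd) }

/-- If `X` embeds complementably in `Y` (via `f`, `g` with `g ∘ f = id`) and
`X ≃ X × X`, then `Y ≃ X × Y`. -/
lemma pelczynski_aux
    {X Y : Type*} [NormedAddCommGroup X] [NormedSpace ℝ X]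
    [NormedAddCommGroup Y] [NormedSpace ℝ Y]
    (f : X →L[ℝ] Y) (g : Y →L[ℝ] X) (hgf : g.comp f = ContinuousLinearMap.id ℝ X)
    (hX : Nonempty ((X × X) ≃L[ℝ] X)) : Nonempty (Y ≃L[ℝ] X × Y) := by
  obtain ⟨eX⟩ := hX
  have gfx : ∀ x, g (f x) = x := fun x => ContinuousLinearMap.ext_iff.mp hgf x
  set K : Submodule ℝ Y := LinearMap.ker (g : Y →ₗ[ℝ] X) with hK
  have hmem : ∀ y : Y, (ContinuousLinearMap.id ℝ Y - f.comp g) y ∈ K := by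
    intro y
    simp [hK, LinearMap.mem_ker, map_sub, gfx]
  let fwd : Y →L[ℝ] X × K :=
    g.prod ((ContinuousLinearMap.id ℝ Y - f.comp g).codRestrict K hmem)
  let bwd : X × K →L[ℝ] Y :=
    f.comp (ContinuousLinearMap.fst ℝ X K) + K.subtypeL.comp (ContinuousLinearMap.snd ℝ X K)
  have h₁ : Function.LeftInverse bwd fwd := by
    intro y
    simp [fwd, bwd]
  have h₂ : Function.RightInverse bwd fwd := by
    rintro ⟨x, k, hk⟩
    have hgk : g k = 0 := hk
    ext
    · simp [fwd, bwd, gfx, hgk]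
    · simp [fwd, bwd, gfx, hgk]
  let e : Y ≃L[ℝ] X × K := ContinuousLinearEquiv.equivOfInverse fwd bwd h₁ h₂
  -- Y ≃ X × K ≃ (X × X) × K ≃ X × (X × K) ≃ X × Y
  exact ⟨e.trans ((eX.symm.prodCongr (ContinuousLinearEquiv.refl ℝ K)).trans
    ((pelczynski_prodAssoc ℝ X X K).trans
      ((ContinuousLinearEquiv.refl ℝ X).prodCongr e.symm)))⟩

/-- Pełczyński decomposition method: if `X` is isomorphic to a complemented subspace of
`Y` (witnessed by bounded maps `f : X → Y`, `g : Y → X` with `g ∘ f = id`), `Y` is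
isomorphic to a complemented subspace of `X`, `X ≅ X ⊕ X` and `Y ≅ Y ⊕ Y`, then the
Banach spaces `X` and `Y` are isomorphic. -/
theorem pelczynski_decomposition
    {X Y : Type*} [NormedAddCommGroup X] [NormedSpace ℝ X] [CompleteSpace X]
    [NormedAddCommGroup Y] [NormedSpace ℝ Y] [CompleteSpace Y]
    (f : X →L[ℝ] Y) (g : Y →L[ℝ] X) (hgf : g.comp f = ContinuousLinearMap.id ℝ X)
    (f' : Y →L[ℝ] X) (g' : X →L[ℝ] Y) (hgf' : g'.comp f' = ContinuousLinearMap.id ℝ Y)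
    (hX : Nonempty ((X × X) ≃L[ℝ] X)) (hY : Nonempty ((Y × Y) ≃L[ℝ] Y)) :
    Nonempty (X ≃L[ℝ] Y) := by
  obtain ⟨eY⟩ := pelczynski_aux f g hgf hX        -- Y ≃ X × Y
  obtain ⟨eX⟩ := pelczynski_aux f' g' hgf' hY     -- X ≃ Y × X
  exact ⟨eX.trans ((ContinuousLinearEquiv.prodComm ℝ Y X).trans eY.symm)⟩
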